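/- Let f : ℝ^p → ℝ be differentiable with m-strongly monotone gradient (m > 0), w_k ≥ 0 weights with w = Σ_k w_k, and let T(x₁,…,x_K) = argmin_θ { (1/2)Σ_k w_k‖θ - x_k‖² + f(θ) }. Then for any two inputs (x_k) and (x_k'), ‖T(x) - T(x')‖ ≤ (w/(m+w)) · max_k ‖x_k - x_k'‖. -/

import Mathlib

open RealInnerProductSpace

variable {p : ℕ}

-- first order condition
lemma foc {K : ℕ} (f : EuclideanSpace ℝ (Fin p) → ℝ) (hf : Differentiable ℝ f)
    (w : Fin K → ℝ) (x : Fin K → EuclideanSpace ℝ (Fin p))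
    (u : EuclideanSpace ℝ (Fin p))
    (hmin : ∀ θ, (1 / 2) * ∑ k, w k * ‖u - x k‖ ^ 2 + f u ≤
        (1 / 2) * ∑ k, w k * ‖θ - x k‖ ^ 2 + f θ) (v : EuclideanSpace ℝ (Fin p)) :
    (∑ k, w k * ⟪u - x k, v⟫) + ⟪gradient f u, v⟫ = 0 := by
  have hterm : ∀ k : Fin K, HasFDerivAt (fun θ : EuclideanSpace ℝ (Fin p) => w k * ‖θ - x k‖ ^ 2)
      (w k • (2 • (innerSL ℝ (u - x k)).comp (ContinuousLinearMap.id ℝ _))) u := by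
    intro k
    exact ((hasFDerivAt_id u).sub_const (x k)).norm_sq.const_mul (w k)
  have hsum : HasFDerivAt (fun θ : EuclideanSpace ℝ (Fin p) =>
      (1 / 2) * ∑ k, w k * ‖θ - x k‖ ^ 2 + f θ)
      (((1:ℝ)/2) • (∑ k, w k • (2 • (innerSL ℝ (u - x k)).comp (ContinuousLinearMap.id ℝ _)))
        + fderiv ℝ f u) u := by
    exact ((HasFDerivAt.fun_sum (fun k _ => hterm k)).const_mul _).add (hf u).hasFDerivAt
  have hloc : IsLocalMin (fun θ : EuclideanSpace ℝ (Fin p) =>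
      (1 / 2) * ∑ k, w k * ‖θ - x k‖ ^ 2 + f θ) u := by
    apply IsMinOn.isLocalMin (s := Set.univ) _ Filter.univ_mem
    intro θ _
    exact hmin θ
  have h0 := hloc.hasFDerivAt_eq_zero hsum
  have h0v := congrArg (fun (L : EuclideanSpace ℝ (Fin p) →L[ℝ] ℝ) => L v) h0
  have hgrad : (fderiv ℝ f u) v = ⟪gradient f u, v⟫ := by
    have := (hf u).hasGradientAt
    rw [hasGradientAt_iff_hasFDerivAt] at this
    rw [this.fderiv]
    simp
  simp only [ContinuousLinearMap.add_apply, ContinuousLinearMap.smul_apply,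
    ContinuousLinearMap.sum_apply, ContinuousLinearMap.coe_smul', Pi.smul_apply,
    ContinuousLinearMap.coe_comp', Function.comp_apply, ContinuousLinearMap.coe_id', id_eq,
    innerSL_apply_apply, ContinuousLinearMap.zero_apply, smul_eq_mul, nsmul_eq_mul,
    Nat.cast_ofNat] at h0v
  rw [hgrad] at h0v
  have hrw : ∑ k, w k * ⟪u - x k, v⟫ = 1/2 * ∑ k, w k * (2 * ⟪u - x k, v⟫) := by
    rw [Finset.mul_sum]; exact Finset.sum_congr rfl (fun k _ => by ring)
  rw [hrw]
  linarith [h0v]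

theorem djam_stmt12 (p K : ℕ) (hK : 0 < K)
    (f : EuclideanSpace ℝ (Fin p) → ℝ) (hf : Differentiable ℝ f)
    (m : ℝ) (hm : 0 < m)
    (hmono : ∀ x y, ⟪gradient f x - gradient f y, x - y⟫ ≥ m * ‖x - y‖ ^ 2)
    (w : Fin K → ℝ) (hw : ∀ k, 0 ≤ w k) (W : ℝ) (hW : W = ∑ k, w k)
    (T : (Fin K → EuclideanSpace ℝ (Fin p)) → EuclideanSpace ℝ (Fin p))
    (hT : ∀ x θ,
      (1 / 2) * ∑ k, w k * ‖T x - x k‖ ^ 2 + f (T x) ≤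
      (1 / 2) * ∑ k, w k * ‖θ - x k‖ ^ 2 + f θ) :
    haveI : Nonempty (Fin K) := Fin.pos_iff_nonempty.mp hK
    ∀ x x' : Fin K → EuclideanSpace ℝ (Fin p),
      ‖T x - T x'‖ ≤
        (W / (m + W)) *
          Finset.univ.sup' Finset.univ_nonempty (fun k => ‖x k - x' k‖) := by
  haveI : Nonempty (Fin K) := Fin.pos_iff_nonempty.mp hK
  intro x x'
  set u := T x with hu
  set u' := T x' with hu'
  set d := u - u' with hd
  set M := Finset.univ.sup' Finset.univ_nonempty (fun k => ‖x k - x' k‖) with hM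
  have h1 := foc f hf w x u (hT x) d
  have h2 := foc f hf w x' u' (hT x') d
  have hMk : ∀ k, ‖x k - x' k‖ ≤ M := fun k => Finset.le_sup' (fun k => ‖x k - x' k‖) (Finset.mem_univ k)
  have hM0 : 0 ≤ M := le_trans (norm_nonneg _) (hMk (Classical.arbitrary _))
  have hW0 : 0 ≤ W := hW ▸ Finset.sum_nonneg (fun k _ => hw k)
  have hmW : 0 < m + W := by linarith
  -- combined first-order equation
  have hsub : ∑ k, (w k * ‖d‖ ^ 2 - w k * ⟪x k - x' k, d⟫)
      + ⟪gradient f u - gradient f u', d⟫ = 0 := by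
    have hkterm : ∀ k : Fin K, w k * ‖d‖ ^ 2 - w k * ⟪x k - x' k, d⟫
        = w k * ⟪u - x k, d⟫ - w k * ⟪u' - x' k, d⟫ := by
      intro k
      have e1 : (u - x k) - (u' - x' k) = d - (x k - x' k) := by rw [hd]; abel
      have e2 : ⟪u - x k, d⟫ - ⟪u' - x' k, d⟫ = ⟪d, d⟫ - ⟪x k - x' k, d⟫ := by
        rw [← inner_sub_left, e1, inner_sub_left]
      rw [real_inner_self_eq_norm_sq] at e2
      linear_combination (w k) * e2.symm
    rw [Finset.sum_congr rfl (fun k _ => hkterm k), Finset.sum_sub_distrib,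
      inner_sub_left]
    linarith
  -- bound the cross term
  have hcross : ∑ k, w k * ⟪x k - x' k, d⟫ ≤ W * M * ‖d‖ := by
    have : ∀ k : Fin K, w k * ⟪x k - x' k, d⟫ ≤ w k * (M * ‖d‖) := by
      intro k
      apply mul_le_mul_of_nonneg_left _ (hw k)
      calc ⟪x k - x' k, d⟫ ≤ ‖x k - x' k‖ * ‖d‖ := real_inner_le_norm _ _
        _ ≤ M * ‖d‖ := mul_le_mul_of_nonneg_right (hMk k) (norm_nonneg _)
    calc ∑ k, w k * ⟪x k - x' k, d⟫ ≤ ∑ k, w k * (M * ‖d‖) :=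
          Finset.sum_le_sum (fun k _ => this k)
      _ = W * M * ‖d‖ := by rw [← Finset.sum_mul, ← hW]; ring
  have hmonod : ⟪gradient f u - gradient f u', d⟫ ≥ m * ‖d‖ ^ 2 := hmono u u'
  have hWd : ∑ k, (w k * ‖d‖ ^ 2 - w k * ⟪x k - x' k, d⟫)
      = W * ‖d‖ ^ 2 - ∑ k, w k * ⟪x k - x' k, d⟫ := by
    rw [Finset.sum_sub_distrib, ← Finset.sum_mul, ← hW]
  have key : (m + W) * ‖d‖ ^ 2 ≤ W * M * ‖d‖ := by
    rw [hWd] at hsub; nlinarith [hsub, hmonod, hcross]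
  rcases eq_or_lt_of_le (norm_nonneg d) with h0 | h0
  · rw [← h0]
    positivity
  · rw [div_mul_eq_mul_div, le_div_iff₀ hmW]
    nlinarith [key, h0]
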